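/- Let v ∈ W_p and let t ∈ W_p be any reflection (so t = s_{α,mp} for some α ∈ Φ⁺ and m ∈ ℤ). If tv·μ ≺ v·μ, then tv·λ ≺ v·λ. -/
import Mathlib


noncomputable section

/-- The real vector space `X ⊗ ℝ`, where `X` is a free abelian group of rank `r`. -/
abbrev Vr (r : ℕ) := Fin r → ℝ

/-- The lattice `X` (identified with `ℤ^r`); its dual lattice `Y` is identified with
the same coordinate lattice via the standard perfect pairing. -/
abbrev Lr (r : ℕ) := Fin r → ℤ

/-- The embedding `X → X ⊗ ℝ`. -/
def toV {r : ℕ} (x : Lr r) : Vr r := fun i => (x i : ℝ)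

/-- The perfect pairing `⟨·,·⟩ : X × Y → ℤ`. -/
def pairZ {r : ℕ} (x y : Lr r) : ℤ := ∑ i, x i * y i

/-- The real extension of the pairing to `(X ⊗ ℝ) × Y → ℝ`. -/
def pairR {r : ℕ} (v : Vr r) (y : Lr r) : ℝ := ∑ i, v i * (y i : ℝ)

/-- The subgroup `ℤI` of `X` generated by a subset `I ⊆ X`. -/
def ZI {r : ℕ} (I : Finset (Lr r)) : AddSubgroup (Lr r) :=
  AddSubgroup.closure (I : Set (Lr r))

/-- The data of a reduced crystallographic root system `Φ ⊆ X` with a fixed positive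
system `Φ⁺`, simple roots `Φ_s`, coroots `α∨ ∈ Y`, a prime `p`, and the half-sum
`ρ ∈ X` of the positive roots. -/
structure ARDatum (r : ℕ) where
  Φ : Finset (Lr r)
  pos : Finset (Lr r)
  simples : Finset (Lr r)
  coroot : Lr r → Lr r
  p : ℕ
  ρ : Lr r
  hp : p.Prime
  root_ne_zero : ∀ α ∈ Φ, α ≠ 0
  pos_sub : pos ⊆ Φ
  simples_sub : simples ⊆ pos
  pos_or_neg : ∀ α ∈ Φ, α ∈ pos ∨ -α ∈ pos
  not_pos_and_neg : ∀ α ∈ pos, -α ∉ pos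
  neg_mem : ∀ α ∈ Φ, -α ∈ Φ
  root_coroot_two : ∀ α ∈ Φ, pairZ α (coroot α) = 2
  reflect_root_mem : ∀ α ∈ Φ, ∀ β ∈ Φ, β - pairZ β (coroot α) • α ∈ Φ
  reflect_coroot_mem : ∀ α ∈ Φ, ∀ β ∈ Φ,
    coroot β - pairZ α (coroot β) • coroot α ∈ coroot '' (Φ : Set (Lr r))
  reduced : ∀ α ∈ Φ, ∀ c : ℤ, c • α ∈ Φ → c = 1 ∨ c = -1
  pos_sum_simples : ∀ β ∈ pos, ∃ c : Lr r → ℕ, β = ∑ α ∈ simples, (c α : ℤ) • α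
  two_rho : (2 : ℤ) • ρ = ∑ α ∈ pos, α

namespace ARDatum

/-- The group of affine transformations of `X ⊗ ℝ`. -/
abbrev G (r : ℕ) := (Vr r) ≃ᵃ[ℝ] (Vr r)

variable {r : ℕ} (D : ARDatum r)

/-- `g` is the affine reflection `s_{α,mp} : v ↦ v − (⟨v,α∨⟩ − mp)·α`. -/
def IsRefl (α : Lr r) (m : ℤ) (g : G r) : Prop :=
  ∀ v : Vr r, g v = v - (pairR v (D.coroot α) - (m : ℝ) * (D.p : ℝ)) • toV α

/-- `g` is the linear reflection `s_α : v ↦ v − ⟨v,α∨⟩·α`. -/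
def IsLinRefl (α : Lr r) (g : G r) : Prop := D.IsRefl α 0 g

/-- `g` is the translation `t_{α,mp} : v ↦ v + mp·α`. -/
def IsTransl (α : Lr r) (m : ℤ) (g : G r) : Prop :=
  ∀ v : Vr r, g v = v + ((m : ℝ) * (D.p : ℝ)) • toV α

/-- The affine Weyl group `W_p`, generated by the `s_α` and the `t_{α,mp}`
for `α ∈ Φ⁺`, `m ∈ ℤ`. -/
def Wp : Subgroup (G r) :=
  Subgroup.closure ({g | ∃ α ∈ D.pos, D.IsLinRefl α g} ∪
    {g | ∃ α ∈ D.pos, ∃ m : ℤ, D.IsTransl α m g})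

/-- The finite Weyl group `W`, generated by the `s_α` for `α ∈ Φ⁺`. -/
def W : Subgroup (G r) :=
  Subgroup.closure {g | ∃ α ∈ D.pos, D.IsLinRefl α g}

/-- The subgroup `W_{I,p}` generated by the `s_α` and `t_{α,mp}` for `α ∈ I`. -/
def WIp (I : Finset (Lr r)) : Subgroup (G r) :=
  Subgroup.closure ({g | ∃ α ∈ I, D.IsLinRefl α g} ∪
    {g | ∃ α ∈ I, ∃ m : ℤ, D.IsTransl α m g})

/-- The subgroup `W_I` of `W` generated by the `s_α` for `α ∈ I`. -/
def WI (I : Finset (Lr r)) : Subgroup (G r) :=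
  Subgroup.closure {g | ∃ α ∈ I, D.IsLinRefl α g}

/-- `g` is a reflection (the reflections of `W_p` are exactly the `s_{α,mp}`). -/
def IsReflection (g : G r) : Prop := ∃ α ∈ D.pos, ∃ m : ℤ, D.IsRefl α m g

/-- The dot action `w·v := w(v+ρ) − ρ`. -/
def dot (g : G r) (v : Vr r) : Vr r := g (v + toV D.ρ) - toV D.ρ

/-- The hyperplane `H_{α,n} = {v : ⟨v+ρ,α∨⟩ = np}`. -/
def Hyp (α : Lr r) (n : ℤ) : Set (Vr r) :=
  {v | pairR (v + toV D.ρ) (D.coroot α) = (n : ℝ) * (D.p : ℝ)}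

/-- The complement of the union of all the hyperplanes `H_{α,n}`. -/
def Reg : Set (Vr r) :=
  {v | ∀ α ∈ D.pos, ∀ n : ℤ, pairR (v + toV D.ρ) (D.coroot α) ≠ (n : ℝ) * (D.p : ℝ)}

/-- The alcove containing `v` (the connected component of `v` in the complement of
the hyperplanes). -/
def alcoveOf (v : Vr r) : Set (Vr r) := connectedComponentIn D.Reg v

/-- `H_{α,n}` contains a wall of `A`, i.e. the interior of `closure A ∩ H_{α,n}`
inside the hyperplane `H_{α,n}` is nonempty. -/
def HasWall (A : Set (Vr r)) (α : Lr r) (n : ℤ) : Prop :=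
  ∃ x ∈ closure A ∩ D.Hyp α n, ∃ ε > 0,
    ∀ y ∈ D.Hyp α n, dist y x < ε → y ∈ closure A

/-- The fundamental alcove `C`. -/
def FundC : Set (Vr r) :=
  {v | ∀ α ∈ D.pos, 0 < pairR (v + toV D.ρ) (D.coroot α) ∧
    pairR (v + toV D.ρ) (D.coroot α) < (D.p : ℝ)}

/-- The closure `C̄` of the fundamental alcove. -/
def FundCBar : Set (Vr r) :=
  {v | ∀ α ∈ D.pos, 0 ≤ pairR (v + toV D.ρ) (D.coroot α) ∧
    pairR (v + toV D.ρ) (D.coroot α) ≤ (D.p : ℝ)}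

/-- The region `C_I`. -/
def CI (I : Finset (Lr r)) : Set (Vr r) :=
  {v | ∀ α ∈ D.pos, α ∈ ZI I → 0 < pairR (v + toV D.ρ) (D.coroot α) ∧
    pairR (v + toV D.ρ) (D.coroot α) < (D.p : ℝ)}

/-- The region `C̄_I`. -/
def CIBar (I : Finset (Lr r)) : Set (Vr r) :=
  {v | ∀ α ∈ D.pos, α ∈ ZI I → 0 ≤ pairR (v + toV D.ρ) (D.coroot α) ∧
    pairR (v + toV D.ρ) (D.coroot α) ≤ (D.p : ℝ)}

/-- `S_p`: the reflections of `W_p` in the walls of the fundamental alcove `C`. -/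
def Sp : Set (G r) :=
  {g | g ∈ D.Wp ∧ ∃ α ∈ D.pos, ∃ m : ℤ, D.IsRefl α m g ∧ D.HasWall D.FundC α m}

/-- One step of the order `⪯` (`↑`): `s_{α,mp}·u ⪯ u` whenever `⟨u+ρ,α∨⟩ ≥ mp`. -/
def UpStep (v u : Vr r) : Prop :=
  ∃ α ∈ D.pos, ∃ m : ℤ, (m : ℝ) * (D.p : ℝ) ≤ pairR (u + toV D.ρ) (D.coroot α) ∧
    v = u - (pairR (u + toV D.ρ) (D.coroot α) - (m : ℝ) * (D.p : ℝ)) • toV α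

/-- The order `⪯` (`↑`): the reflexive-transitive closure of `UpStep`. -/
def Up : Vr r → Vr r → Prop := Relation.ReflTransGen D.UpStep

/-- The strict order `≺`. -/
def Ups (v u : Vr r) : Prop := D.Up v u ∧ v ≠ u

/-- The order `≤`: `v ≤ u` iff `u − v` is a `ℤ≥0`-combination of the simple roots. -/
def Le (v u : Vr r) : Prop :=
  ∃ c : Lr r → ℕ, u - v = ∑ α ∈ D.simples, (c α : ℝ) • toV α

/-- The strict order `<`. -/
def Lt (v u : Vr r) : Prop := D.Le v u ∧ v ≠ u

/-- `X₊ = {ν ∈ X : ⟨ν+ρ,α∨⟩ ≥ 0 for all α ∈ Φ⁺}`, viewed inside `X ⊗ ℝ`. -/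
def XplusR : Set (Vr r) :=
  {v | (∃ ν : Lr r, toV ν = v) ∧ ∀ α ∈ D.pos, 0 ≤ pairR (v + toV D.ρ) (D.coroot α)}

/-- `n_α(v)`: the unique integer with `n_α(v)·p < ⟨v+ρ,α∨⟩ < (n_α(v)+1)·p`
(for `v` on none of the hyperplanes), realised as a floor. -/
def nfl (v : Vr r) (α : Lr r) : ℤ := ⌊pairR (v + toV D.ρ) (D.coroot α) / (D.p : ℝ)⌋

/-- `d(v) = ∑_{α ∈ Φ⁺} n_α(v)`. -/
def dfn (v : Vr r) : ℤ := ∑ α ∈ D.pos, D.nfl v α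

/-- The sublattice `pX` of `X`. -/
def pLat : AddSubgroup (Lr r) where
  carrier := {x | ∃ y : Lr r, x = (D.p : ℤ) • y}
  zero_mem' := ⟨0, by simp⟩
  add_mem' := by rintro a b ⟨y, rfl⟩ ⟨z, rfl⟩; exact ⟨y + z, (smul_add _ _ _).symm⟩
  neg_mem' := by rintro a ⟨y, rfl⟩; exact ⟨-y, (smul_neg _ _).symm⟩

/-- The orbit of `ν + pX` under the dot action of `W_I` on `X/pX`. -/
def dotOrbit (I : Finset (Lr r)) (ν : Lr r) : Set (Lr r ⧸ D.pLat) :=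
  {c | ∃ w ∈ D.WI I, ∃ ν' : Lr r, toV ν' = D.dot w (toV ν) ∧
    c = QuotientAddGroup.mk ν'}

end ARDatum
namespace Aux

variable {r : ℕ}

/-- real dot product on `Vr`. -/
def dotV (v w : Vr r) : ℝ := ∑ i, v i * w i

lemma pairR_eq_dotV (v : Vr r) (y : Lr r) : pairR v y = dotV v (toV y) := rfl

lemma toV_add (a b : Lr r) : toV (a + b) = toV a + toV b := by
  funext i; simp [toV]

lemma toV_sub (a b : Lr r) : toV (a - b) = toV a - toV b := by
  funext i; simp [toV]

lemma toV_neg (a : Lr r) : toV (-a) = -toV a := by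
  funext i; simp [toV]

lemma toV_zero : toV (0 : Lr r) = 0 := by
  funext i; simp [toV]

lemma toV_zsmul (n : ℤ) (a : Lr r) : toV (n • a) = (n : ℝ) • toV a := by
  funext i; simp [toV]

lemma toV_inj {a b : Lr r} (h : toV a = toV b) : a = b := by
  funext i
  have := congrFun h i
  simpa [toV] using this

lemma toV_eq_zero {a : Lr r} (h : toV a = 0) : a = 0 := by
  have : toV a = toV 0 := by rw [h, toV_zero]
  exact toV_inj this

lemma pairR_toV (a y : Lr r) : pairR (toV a) y = (pairZ a y : ℝ) := by
  simp [pairR, pairZ, toV]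

lemma dotV_toV (a b : Lr r) : dotV (toV a) (toV b) = (pairZ a b : ℝ) := pairR_toV a b

lemma dotV_comm (v w : Vr r) : dotV v w = dotV w v := by
  simp [dotV, mul_comm]

lemma dotV_add_left (u v w : Vr r) : dotV (u + v) w = dotV u w + dotV v w := by
  simp [dotV, add_mul, Finset.sum_add_distrib]

lemma dotV_add_right (u v w : Vr r) : dotV u (v + w) = dotV u v + dotV u w := by
  simp [dotV, mul_add, Finset.sum_add_distrib]

lemma dotV_smul_left (c : ℝ) (v w : Vr r) : dotV (c • v) w = c * dotV v w := by
  simp [dotV, Finset.mul_sum, mul_assoc]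

lemma dotV_smul_right (c : ℝ) (v w : Vr r) : dotV v (c • w) = c * dotV v w := by
  rw [dotV_comm, dotV_smul_left, dotV_comm]

lemma dotV_neg_left (v w : Vr r) : dotV (-v) w = -dotV v w := by
  simp [dotV]

lemma dotV_neg_right (v w : Vr r) : dotV v (-w) = -dotV v w := by
  rw [dotV_comm, dotV_neg_left, dotV_comm]

lemma dotV_sub_left (u v w : Vr r) : dotV (u - v) w = dotV u w - dotV v w := by
  simp [dotV, sub_mul, Finset.sum_sub_distrib]

lemma dotV_sub_right (u v w : Vr r) : dotV u (v - w) = dotV u v - dotV u w := by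
  rw [dotV_comm, dotV_sub_left, dotV_comm v u, dotV_comm w u]

lemma dotV_zero_left (w : Vr r) : dotV 0 w = 0 := by simp [dotV]

lemma dotV_zero_right (w : Vr r) : dotV w 0 = 0 := by simp [dotV]

lemma dotV_self_nonneg (v : Vr r) : 0 ≤ dotV v v :=
  Finset.sum_nonneg fun i _ => mul_self_nonneg _

lemma dotV_self_eq_zero {v : Vr r} (h : dotV v v = 0) : v = 0 := by
  funext i
  have h1 : ∀ j ∈ Finset.univ, (0:ℝ) ≤ v j * v j := fun j _ => mul_self_nonneg _
  have := (Finset.sum_eq_zero_iff_of_nonneg h1).1 h i (Finset.mem_univ i)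
  have := mul_self_eq_zero.1 this
  simpa using this

lemma dotV_self_pos {v : Vr r} (h : v ≠ 0) : 0 < dotV v v := by
  rcases lt_or_eq_of_le (dotV_self_nonneg v) with h1 | h1
  · exact h1
  · exact absurd (dotV_self_eq_zero h1.symm) h

lemma dotV_sum_right {ι : Type*} (s : Finset ι) (v : Vr r) (f : ι → Vr r) :
    dotV v (∑ i ∈ s, f i) = ∑ i ∈ s, dotV v (f i) := by
  classical
  induction s using Finset.induction with
  | empty => simp [dotV_zero_right]
  | @insert a s' ha ih => simp [Finset.sum_insert ha, dotV_add_right, ih]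

lemma dotV_sum_left {ι : Type*} (s : Finset ι) (v : Vr r) (f : ι → Vr r) :
    dotV (∑ i ∈ s, f i) v = ∑ i ∈ s, dotV (f i) v := by
  rw [dotV_comm, dotV_sum_right]
  exact Finset.sum_congr rfl fun i _ => dotV_comm _ _

end Aux

namespace Aux

variable {r : ℕ}

lemma pairZ_comm (a b : Lr r) : pairZ a b = pairZ b a := by
  simp [pairZ, mul_comm]

lemma pairZ_add_left (a b c : Lr r) : pairZ (a + b) c = pairZ a c + pairZ b c := by
  simp [pairZ, add_mul, Finset.sum_add_distrib]

lemma pairZ_sub_left (a b c : Lr r) : pairZ (a - b) c = pairZ a c - pairZ b c := by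
  simp [pairZ, sub_mul, Finset.sum_sub_distrib]

lemma pairZ_neg_left (a b : Lr r) : pairZ (-a) b = -pairZ a b := by
  simp [pairZ]

lemma pairZ_neg_right (a b : Lr r) : pairZ a (-b) = -pairZ a b := by
  simp [pairZ]

lemma pairZ_zsmul_left (n : ℤ) (a b : Lr r) : pairZ (n • a) b = n * pairZ a b := by
  simp [pairZ, Finset.mul_sum, mul_assoc]

lemma pairZ_zsmul_right (n : ℤ) (a b : Lr r) : pairZ a (n • b) = n * pairZ a b := by
  rw [pairZ_comm, pairZ_zsmul_left, pairZ_comm]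

lemma pairR_add_left (u v : Vr r) (y : Lr r) : pairR (u + v) y = pairR u y + pairR v y := by
  rw [pairR_eq_dotV, pairR_eq_dotV, pairR_eq_dotV, dotV_add_left]

lemma pairR_sub_left (u v : Vr r) (y : Lr r) : pairR (u - v) y = pairR u y - pairR v y := by
  rw [pairR_eq_dotV, pairR_eq_dotV, pairR_eq_dotV, dotV_sub_left]

lemma pairR_smul_left (c : ℝ) (v : Vr r) (y : Lr r) : pairR (c • v) y = c * pairR v y := by
  rw [pairR_eq_dotV, pairR_eq_dotV, dotV_smul_left]

lemma pairR_sub_right (v : Vr r) (a b : Lr r) : pairR v (a - b) = pairR v a - pairR v b := by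
  rw [pairR_eq_dotV, pairR_eq_dotV, pairR_eq_dotV, toV_sub, dotV_sub_right]

lemma pairR_neg_right (v : Vr r) (a : Lr r) : pairR v (-a) = -pairR v a := by
  rw [pairR_eq_dotV, pairR_eq_dotV, toV_neg, dotV_neg_right]

lemma pairR_zsmul_right (n : ℤ) (v : Vr r) (a : Lr r) : pairR v (n • a) = (n : ℝ) * pairR v a := by
  rw [pairR_eq_dotV, pairR_eq_dotV, toV_zsmul, dotV_smul_right]

end Aux

namespace Aux

variable {r : ℕ}

section Avg

variable (R : Finset (Lr r)) (cor : Lr r → Lr r)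

/-- The linear "reflection" attached to `v` (with coroot `cor v`). -/
def reflM (v : Lr r) : Module.End ℝ (Vr r) where
  toFun x := x - dotV x (toV (cor v)) • toV v
  map_add' x y := by
    simp only [dotV_add_left, add_smul]; abel
  map_smul' c x := by
    simp only [dotV_smul_left, RingHom.id_apply, smul_smul, smul_sub]

lemma reflM_apply (v : Lr r) (x : Vr r) :
    reflM cor v x = x - dotV x (toV (cor v)) • toV v := rfl

/-- The span of the "roots". -/
def NNsp : Submodule ℝ (Vr r) := Submodule.span ℝ (toV '' (R : Set (Lr r)))

lemma toV_mem_NNsp {v : Lr r} (hv : v ∈ R) : toV v ∈ NNsp R :=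
  Submodule.subset_span ⟨v, hv, rfl⟩

lemma reflM_mem {v : Lr r} (hv : v ∈ R) : ∀ x ∈ NNsp R, reflM cor v x ∈ NNsp R :=
  fun _ hx => sub_mem hx (Submodule.smul_mem _ _ (toV_mem_NNsp R hv))

/-- The restricted reflection on the span. -/
def rrE (v : Lr r) (hv : v ∈ R) : Module.End ℝ ↥(NNsp R) :=
  (reflM cor v).restrict (reflM_mem R cor hv)

lemma rrE_apply (v : Lr r) (hv : v ∈ R) (x : ↥(NNsp R)) :
    ((rrE R cor v hv x : ↥(NNsp R)) : Vr r)
      = (x : Vr r) - dotV (x : Vr r) (toV (cor v)) • toV v := by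
  rw [rrE, LinearMap.restrict_apply]
  rfl

/-- The element `toV v` of the span. -/
def vhat (v : Lr r) (hv : v ∈ R) : ↥(NNsp R) := ⟨toV v, toV_mem_NNsp R hv⟩

/-- The monoid generated by the restricted reflections. -/
def MMon : Submonoid (Module.End ℝ ↥(NNsp R)) :=
  Submonoid.closure {f | ∃ v, ∃ hv : v ∈ R, f = rrE R cor v hv}

lemma rrE_mem_MMon (v : Lr r) (hv : v ∈ R) : rrE R cor v hv ∈ MMon R cor :=
  Submonoid.subset_closure ⟨v, hv, rfl⟩

lemma mapsR (hcl : ∀ v ∈ R, ∀ w ∈ R, w - pairZ w (cor v) • v ∈ R) :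
    ∀ f ∈ MMon R cor, ∀ w, ∀ hw : w ∈ R,
      ∃ w', ∃ hw' : w' ∈ R, f (vhat R w hw) = vhat R w' hw' := by
  intro f hf
  refine Submonoid.closure_induction ?_ ?_ ?_ hf
  · rintro f ⟨v, hv, rfl⟩ w hw
    refine ⟨w - pairZ w (cor v) • v, hcl v hv w hw, ?_⟩
    apply Subtype.ext
    rw [rrE_apply]
    show toV w - dotV (toV w) (toV (cor v)) • toV v = toV (w - pairZ w (cor v) • v)
    rw [toV_sub, toV_zsmul, dotV_toV]
  · intro w hw
    exact ⟨w, hw, rfl⟩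
  · intro f g _ _ ihf ihg w hw
    obtain ⟨w', hw', h1⟩ := ihg w hw
    obtain ⟨w'', hw'', h2⟩ := ihf w' hw'
    exact ⟨w'', hw'', by rw [Module.End.mul_apply, h1, h2]⟩

lemma span_top :
    Submodule.span ℝ {x : ↥(NNsp R) | (x : Vr r) ∈ toV '' (R : Set (Lr r))} = ⊤ := by
  rw [Submodule.eq_top_iff']
  rintro ⟨x, hx⟩
  have hx' : x ∈ Submodule.span ℝ (toV '' (R : Set (Lr r))) := hx
  refine Submodule.span_induction (p := fun y hy =>
      (⟨y, hy⟩ : ↥(NNsp R)) ∈ Submodule.span ℝ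
        {x : ↥(NNsp R) | (x : Vr r) ∈ toV '' (R : Set (Lr r))}) ?_ ?_ ?_ ?_ hx'
  · intro y hy
    exact Submodule.subset_span hy
  · exact zero_mem _
  · intro y z hy hz ihy ihz
    exact add_mem ihy ihz
  · intro c y hy ihy
    exact Submodule.smul_mem _ _ ihy

lemma ext_on_roots {f g : Module.End ℝ ↥(NNsp R)}
    (h : ∀ w, ∀ hw : w ∈ R, f (vhat R w hw) = g (vhat R w hw)) : f = g := by
  apply LinearMap.ext_on (span_top R)
  rintro x hx
  obtain ⟨w, hw, hwx⟩ := hx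
  have : x = vhat R w hw := Subtype.ext hwx.symm
  rw [this]
  exact h w hw

lemma MMon_finite (hcl : ∀ v ∈ R, ∀ w ∈ R, w - pairZ w (cor v) • v ∈ R) :
    (MMon R cor : Set (Module.End ℝ ↥(NNsp R))).Finite := by
  classical
  have hfinT : (toV '' (R : Set (Lr r))).Finite := R.finite_toSet.image _
  have himg : ((fun (f : Module.End ℝ ↥(NNsp R)) (w : ↥R) => (f (vhat R w.1 w.2) : Vr r)) ''
      (MMon R cor : Set _)) ⊆ Set.univ.pi (fun _ : ↥R => toV '' (R : Set (Lr r))) := by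
    rintro _ ⟨f, hf, rfl⟩ w _
    obtain ⟨w', hw', h⟩ := mapsR R cor hcl f hf w.1 w.2
    dsimp only
    rw [h]
    exact ⟨w', hw', rfl⟩
  have h1 : ((fun (f : Module.End ℝ ↥(NNsp R)) (w : ↥R) => (f (vhat R w.1 w.2) : Vr r)) ''
      (MMon R cor : Set _)).Finite := (Set.Finite.pi (fun _ => hfinT)).subset himg
  refine Set.Finite.of_finite_image h1 ?_
  intro f _ g _ hfg
  apply ext_on_roots R
  intro w hw
  have := congrFun hfg ⟨w, hw⟩
  exact Subtype.ext this

lemma rrE_sq (h2 : ∀ v ∈ R, pairZ v (cor v) = 2) (v : Lr r) (hv : v ∈ R) :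
    rrE R cor v hv * rrE R cor v hv = 1 := by
  apply LinearMap.ext
  intro x
  rw [Module.End.mul_apply, Module.End.one_apply]
  apply Subtype.ext
  rw [rrE_apply, rrE_apply]
  have hvv : dotV (toV v) (toV (cor v)) = (2 : ℝ) := by
    rw [← pairR_eq_dotV, pairR_toV, h2 v hv]; norm_num
  rw [dotV_sub_left, dotV_smul_left, hvv]
  ring_nf
  module

lemma MMon_inv (h2 : ∀ v ∈ R, pairZ v (cor v) = 2) :
    ∀ f ∈ MMon R cor, ∃ g ∈ MMon R cor, f * g = 1 ∧ g * f = 1 := by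
  intro f hf
  refine Submonoid.closure_induction ?_ ?_ ?_ hf
  · rintro f ⟨v, hv, rfl⟩
    exact ⟨rrE R cor v hv, rrE_mem_MMon R cor v hv, rrE_sq R cor h2 v hv, rrE_sq R cor h2 v hv⟩
  · exact ⟨1, one_mem _, one_mul 1, one_mul 1⟩
  · rintro f g _ _ ⟨f', hf', hff', hf'f⟩ ⟨g', hg', hgg', hg'g⟩
    refine ⟨g' * f', mul_mem hg' hf', ?_, ?_⟩
    · rw [mul_assoc, ← mul_assoc g g' f', hgg', one_mul, hff']
    · rw [mul_assoc, ← mul_assoc f' f g, hf'f, one_mul, hg'g]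

variable (hcl : ∀ v ∈ R, ∀ w ∈ R, w - pairZ w (cor v) • v ∈ R)

/-- The averaged bilinear form. -/
def Bform : ↥(NNsp R) → ↥(NNsp R) → ℝ :=
  fun x y => ∑ f ∈ (MMon_finite R cor hcl).toFinset, dotV ((f x : ↥(NNsp R)) : Vr r) ((f y : ↥(NNsp R)) : Vr r)

lemma Bform_add_right (x y z : ↥(NNsp R)) :
    Bform R cor hcl x (y + z) = Bform R cor hcl x y + Bform R cor hcl x z := by
  rw [Bform, Bform, Bform, ← Finset.sum_add_distrib]
  refine Finset.sum_congr rfl fun f _ => ?_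
  rw [map_add]
  exact dotV_add_right _ _ _

lemma Bform_smul_right (c : ℝ) (x y : ↥(NNsp R)) :
    Bform R cor hcl x (c • y) = c * Bform R cor hcl x y := by
  rw [Bform, Bform, Finset.mul_sum]
  refine Finset.sum_congr rfl fun f _ => ?_
  rw [map_smul]
  exact dotV_smul_right _ _ _

lemma Bform_sub_left (x y z : ↥(NNsp R)) :
    Bform R cor hcl (x - y) z = Bform R cor hcl x z - Bform R cor hcl y z := by
  rw [Bform, Bform, Bform, ← Finset.sum_sub_distrib]
  refine Finset.sum_congr rfl fun f _ => ?_
  rw [map_sub]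
  exact dotV_sub_left _ _ _

lemma Bform_neg_right (x y : ↥(NNsp R)) :
    Bform R cor hcl x (-y) = - Bform R cor hcl x y := by
  have h := Bform_smul_right R cor hcl (-1 : ℝ) x y
  rw [neg_one_smul ℝ y] at h
  rw [h]; ring

lemma Bform_smul_left (c : ℝ) (x y : ↥(NNsp R)) :
    Bform R cor hcl (c • x) y = c * Bform R cor hcl x y := by
  rw [Bform, Bform, Finset.mul_sum]
  refine Finset.sum_congr rfl fun f _ => ?_
  rw [map_smul]
  exact dotV_smul_left _ _ _

lemma Bform_zero_right (x : ↥(NNsp R)) : Bform R cor hcl x 0 = 0 := by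
  rw [Bform]
  refine Finset.sum_eq_zero fun f _ => ?_
  rw [map_zero]
  show dotV _ (((0 : ↥(NNsp R))) : Vr r) = 0
  rw [ZeroMemClass.coe_zero]
  exact dotV_zero_right _

lemma Bform_sum_right {ι : Type*} (s : Finset ι) (g : ι → ↥(NNsp R)) (x : ↥(NNsp R)) :
    Bform R cor hcl x (∑ i ∈ s, g i) = ∑ i ∈ s, Bform R cor hcl x (g i) := by
  classical
  induction s using Finset.induction with
  | empty => simp [Bform_zero_right]
  | @insert a s' ha ih =>
    rw [Finset.sum_insert ha, Finset.sum_insert ha, Bform_add_right, ih]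

lemma Bform_invariant (h2 : ∀ v ∈ R, pairZ v (cor v) = 2)
    {f₀ : Module.End ℝ ↥(NNsp R)} (hf₀ : f₀ ∈ MMon R cor) (x y : ↥(NNsp R)) :
    Bform R cor hcl (f₀ x) (f₀ y) = Bform R cor hcl x y := by
  classical
  obtain ⟨g₀, hg₀, hfg, hgf⟩ := MMon_inv R cor h2 f₀ hf₀
  rw [Bform, Bform]
  refine Finset.sum_nbij' (fun f => f * f₀) (fun f => f * g₀) ?_ ?_ ?_ ?_ ?_
  · intro f hf
    rw [Set.Finite.mem_toFinset] at hf ⊢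
    exact mul_mem hf hf₀
  · intro f hf
    rw [Set.Finite.mem_toFinset] at hf ⊢
    exact mul_mem hf hg₀
  · intro f _
    show f * f₀ * g₀ = f
    rw [mul_assoc, hfg, mul_one]
  · intro f _
    show f * g₀ * f₀ = f
    rw [mul_assoc, hgf, mul_one]
  · intro f _
    rw [Module.End.mul_apply, Module.End.mul_apply]

lemma one_mem_Mfin : (1 : Module.End ℝ ↥(NNsp R)) ∈ (MMon_finite R cor hcl).toFinset := by
  rw [Set.Finite.mem_toFinset]; exact one_mem _

lemma Bform_pos (hnz : ∀ v ∈ R, v ≠ 0) (v : Lr r) (hv : v ∈ R) :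
    0 < Bform R cor hcl (vhat R v hv) (vhat R v hv) := by
  rw [Bform]
  refine Finset.sum_pos' (fun f _ => dotV_self_nonneg _) ⟨1, one_mem_Mfin R cor hcl, ?_⟩
  rw [Module.End.one_apply]
  refine dotV_self_pos ?_
  show toV v ≠ 0
  intro h
  exact hnz v hv (toV_eq_zero h)

lemma Bform_self_zero (x : ↥(NNsp R)) (h : Bform R cor hcl x x = 0) : (x : Vr r) = 0 := by
  have h1 : dotV ((((1 : Module.End ℝ ↥(NNsp R)) x : ↥(NNsp R))) : Vr r) _ ≤ Bform R cor hcl x x :=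
    Finset.single_le_sum (f := fun f => dotV ((f x : ↥(NNsp R)) : Vr r) ((f x : ↥(NNsp R)) : Vr r))
      (fun f _ => dotV_self_nonneg _) (one_mem_Mfin R cor hcl)
  rw [Module.End.one_apply, h] at h1
  exact dotV_self_eq_zero (le_antisymm h1 (dotV_self_nonneg _))

lemma Bform_key (h2 : ∀ v ∈ R, pairZ v (cor v) = 2)
    (v : Lr r) (hv : v ∈ R) (x : ↥(NNsp R)) :
    2 * Bform R cor hcl x (vhat R v hv)
      = dotV (x : Vr r) (toV (cor v)) * Bform R cor hcl (vhat R v hv) (vhat R v hv) := by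
  have hvv : dotV (toV v) (toV (cor v)) = (2 : ℝ) := by
    rw [← pairR_eq_dotV, pairR_toV, h2 v hv]; norm_num
  set σ := rrE R cor v hv with hσ
  set c := dotV (x : Vr r) (toV (cor v)) with hc
  have hσv : σ (vhat R v hv) = - vhat R v hv := by
    apply Subtype.ext
    rw [hσ, rrE_apply]
    show toV v - dotV (toV v) (toV (cor v)) • toV v = -(toV v)
    rw [hvv]; module
  have hσx : σ x = x - c • (vhat R v hv) := by
    apply Subtype.ext
    rw [hσ, rrE_apply]
    rfl
  have e1 : Bform R cor hcl (σ x) (σ (vhat R v hv)) = Bform R cor hcl x (vhat R v hv) :=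
    Bform_invariant R cor hcl h2 (rrE_mem_MMon R cor v hv) _ _
  rw [hσv, hσx, Bform_neg_right, Bform_sub_left] at e1
  have e2 : Bform R cor hcl (c • vhat R v hv) (vhat R v hv)
      = c * Bform R cor hcl (vhat R v hv) (vhat R v hv) := Bform_smul_left R cor hcl c _ _
  rw [e2] at e1
  linarith

end Avg

end Aux

namespace Aux

open ARDatum

variable {r : ℕ} (D : ARDatum r)

/-- Key rigidity: `coroot (-γ) = - coroot γ`. -/
lemma neg_coroot {γ : Lr r} (hγ : γ ∈ D.Φ) : D.coroot (-γ) = -D.coroot γ := by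
  classical
  -- `-coroot γ` is a coroot of some root δ
  have h2γ : pairZ γ (D.coroot γ) = 2 := D.root_coroot_two γ hγ
  have hex : ∃ δ ∈ D.Φ, D.coroot δ = -D.coroot γ := by
    have := D.reflect_coroot_mem γ hγ γ hγ
    rw [h2γ] at this
    have h : D.coroot γ - (2:ℤ) • D.coroot γ = -D.coroot γ := by
      rw [two_smul]; abel
    rw [h] at this
    obtain ⟨δ, hδ, hδ2⟩ := this
    exact ⟨δ, hδ, hδ2⟩
  obtain ⟨δ, hδΦ, hδc⟩ := hex
  -- pairings
  have h2δ : pairZ δ (D.coroot δ) = 2 := D.root_coroot_two δ hδΦ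
  have hδγ : pairZ δ (D.coroot γ) = -2 := by
    rw [hδc, pairZ_neg_right] at h2δ; omega
  have hγδ : pairZ γ (D.coroot δ) = -2 := by
    rw [hδc, pairZ_neg_right, h2γ]
  -- show δ = -γ
  have hkey : δ = -γ := by
    by_contra hne
    have hsum : γ + δ ≠ 0 := fun h0 => hne (by
      have : δ = -γ := by
        have := congrArg (fun x => x - γ) h0
        simpa [add_sub_cancel_left] using (by linear_combination (norm := module) h0 : δ = -γ)
      exact this)
    -- the chain  A n = (2n+1)γ + 2nδ  of roots
    set A : ℕ → Lr r := fun n => ((2*(n:ℤ)+1)) • γ + (2*(n:ℤ)) • δ with hA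
    have hmem : ∀ n, A n ∈ D.Φ := by
      intro n
      induction n with
      | zero =>
        have h0 : A 0 = γ := by rw [hA]; push_cast; module
        rw [h0]; exact hγ
      | succ k ih =>
        -- s_δ then s_γ
        have hp1 : pairZ (A k) (D.coroot δ) = -2 := by
          rw [hA]
          simp only [pairZ_add_left, pairZ_zsmul_left, hγδ, h2δ]
          ring
        have m1 : A k - pairZ (A k) (D.coroot δ) • δ ∈ D.Φ :=
          D.reflect_root_mem δ hδΦ (A k) (ih)
        rw [hp1] at m1
        have hform1 : A k - (-2:ℤ) • δ = (2*(k:ℤ)+1) • γ + (2*(k:ℤ)+2) • δ := by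
          rw [hA]
          dsimp only
          module
        rw [hform1] at m1
        have hp2 : pairZ ((2*(k:ℤ)+1) • γ + (2*(k:ℤ)+2) • δ) (D.coroot γ) = -2 := by
          simp only [pairZ_add_left, pairZ_zsmul_left, h2γ, hδγ]
          ring
        have m2 := D.reflect_root_mem γ hγ _ m1
        rw [hp2] at m2
        have hform2 : (2*(k:ℤ)+1) • γ + (2*(k:ℤ)+2) • δ - (-2:ℤ) • γ
            = (2*((k:ℤ)+1)+1) • γ + (2*((k:ℤ)+1)) • δ := by module
        rw [hform2] at m2
        have : A (k+1) = (2*((k:ℤ)+1)+1) • γ + (2*((k:ℤ)+1)) • δ := by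
          rw [hA]; push_cast; module
        rw [this]
        exact m2
    have hinj : Function.Injective A := by
      intro n m hnm
      by_contra hne'
      have : ((2*(n:ℤ)) - (2*(m:ℤ))) • (γ + δ) = 0 := by
        have := hnm
        rw [hA] at this
        dsimp only at this
        have h' : ((2*(n:ℤ)+1)) • γ + (2*(n:ℤ)) • δ - (((2*(m:ℤ)+1)) • γ + (2*(m:ℤ)) • δ) = 0 := by
          rw [this]; abel
        calc ((2*(n:ℤ)) - (2*(m:ℤ))) • (γ + δ)
            = ((2*(n:ℤ)+1)) • γ + (2*(n:ℤ)) • δ - (((2*(m:ℤ)+1)) • γ + (2*(m:ℤ)) • δ) := by module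
          _ = 0 := h'
      rcases smul_eq_zero.1 this with h | h
      · have : (n:ℤ) = m := by omega
        exact hne' (by exact_mod_cast this)
      · exact hsum h
    have : (D.Φ : Set (Lr r)).Infinite :=
      Set.infinite_of_injective_forall_mem hinj (fun n => hmem n)
    exact this D.Φ.finite_toSet
  rw [← hkey, hδc]

end Aux

namespace Aux

namespace PosIndep

variable {r : ℕ} (D : ARDatum r)

/-- The dual root data: coroots as roots. -/
def R2 : Finset (Lr r) := D.Φ.image D.coroot

def cor2 : Lr r → Lr r := fun y =>
  if h : ∃ δ ∈ D.Φ, D.coroot δ = y then h.choose else 0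

lemma cor2_spec {y : Lr r} (hy : y ∈ R2 D) :
    cor2 D y ∈ D.Φ ∧ D.coroot (cor2 D y) = y := by
  rw [R2, Finset.mem_image] at hy
  obtain ⟨δ, hδ, hδy⟩ := hy
  have hex : ∃ δ ∈ D.Φ, D.coroot δ = y := ⟨δ, hδ, hδy⟩
  rw [cor2, dif_pos hex]
  exact ⟨hex.choose_spec.1, hex.choose_spec.2⟩

lemma coroot_mem_R2 {δ : Lr r} (hδ : δ ∈ D.Φ) : D.coroot δ ∈ R2 D := by
  rw [R2, Finset.mem_image]; exact ⟨δ, hδ, rfl⟩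

lemma h2_R2 : ∀ v ∈ R2 D, pairZ v (cor2 D v) = 2 := by
  intro v hv
  obtain ⟨hmem, hco⟩ := cor2_spec D hv
  have h := D.root_coroot_two _ hmem
  rw [hco] at h
  rw [pairZ_comm]
  exact h

lemma hcl_R2 : ∀ v ∈ R2 D, ∀ w ∈ R2 D, w - pairZ w (cor2 D v) • v ∈ R2 D := by
  intro v hv w hw
  obtain ⟨hvm, hvc⟩ := cor2_spec D hv
  obtain ⟨wδ, hwδ, hwc⟩ : ∃ δ ∈ D.Φ, D.coroot δ = w := by
    rw [R2, Finset.mem_image] at hw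
    exact hw
  have h := D.reflect_coroot_mem (cor2 D v) hvm wδ hwδ
  rw [hwc, hvc] at h
  obtain ⟨γ, hγ, hγc⟩ := h
  rw [pairZ_comm w (cor2 D v), ← hγc]
  exact coroot_mem_R2 D (by exact_mod_cast hγ)

lemma hnz_R2 : ∀ v ∈ R2 D, v ≠ 0 := by
  intro v hv h0
  have h := h2_R2 D v hv
  rw [h0] at h
  simp [pairZ] at h

lemma hcl_R1 : ∀ v ∈ D.Φ, ∀ w ∈ D.Φ, w - pairZ w (D.coroot v) • v ∈ D.Φ :=
  fun v hv w hw => D.reflect_root_mem v hv w hw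

end PosIndep

variable {r : ℕ} (D : ARDatum r)

open PosIndep in
/-- Positivity: no nontrivial nonnegative dependence among positive roots,
given a vector pairing positively with all positive coroots. -/
lemma pos_indep (L : Vr r) (hL : ∀ α ∈ D.pos, 0 < pairR L (D.coroot α))
    (d : Lr r → ℝ) (hd : ∀ β, 0 ≤ d β)
    (hsum : ∑ β ∈ D.pos, d β • toV β = 0) : ∀ β ∈ D.pos, d β = 0 := by
  classical
  have hB1 : True := trivial
  -- the element Sel of the span of the roots
  set Sel : ↥(NNsp D.Φ) :=
    ∑ b ∈ D.pos.attach, d b.1 • vhat D.Φ b.1 (D.pos_sub b.2) with hSel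
  have hS0 : Sel = 0 := by
    apply Subtype.ext
    rw [hSel]
    push_cast
    show ∑ b ∈ D.pos.attach, d b.1 • toV b.1 = ((0 : ↥(NNsp D.Φ)) : Vr r)
    rw [ZeroMemClass.coe_zero, Finset.sum_attach D.pos (fun β => d β • toV β)]
    exact hsum
  -- coefficients
  set e : ↥D.pos → ℝ := fun b =>
    d b.1 * Bform D.Φ D.coroot (hcl_R1 D) (vhat D.Φ b.1 (D.pos_sub b.2)) (vhat D.Φ b.1 (D.pos_sub b.2)) / 2 with he
  have hbpos : ∀ b : ↥D.pos,
      0 < Bform D.Φ D.coroot (hcl_R1 D) (vhat D.Φ b.1 (D.pos_sub b.2)) (vhat D.Φ b.1 (D.pos_sub b.2)) :=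
    fun b => Bform_pos D.Φ D.coroot (hcl_R1 D) D.root_ne_zero b.1 (D.pos_sub b.2)
  have henn : ∀ b : ↥D.pos, 0 ≤ e b :=
    fun b => div_nonneg (mul_nonneg (hd b.1) (hbpos b).le) (by norm_num)
  -- the coroot-side vector z
  set z : Vr r := ∑ b ∈ D.pos.attach, e b • toV (D.coroot b.1) with hz
  -- z is orthogonal to all roots
  have hzorth : ∀ γ ∈ D.Φ, dotV (toV γ) z = 0 := by
    intro γ hγ
    set x : ↥(NNsp D.Φ) := ⟨toV γ, toV_mem_NNsp D.Φ hγ⟩ with hx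
    have h1 : Bform D.Φ D.coroot (hcl_R1 D) x Sel = 0 := by
      rw [hS0]; exact Bform_zero_right _ _ _ _
    rw [hSel, Bform_sum_right] at h1
    have h2 : ∀ b ∈ D.pos.attach,
        Bform D.Φ D.coroot (hcl_R1 D) x (d b.1 • vhat D.Φ b.1 (D.pos_sub b.2))
          = e b * dotV (toV γ) (toV (D.coroot b.1)) := by
      intro b _
      rw [Bform_smul_right]
      have hkey := Bform_key D.Φ D.coroot (hcl_R1 D) D.root_coroot_two b.1 (D.pos_sub b.2) x
      have h3 : Bform D.Φ D.coroot (hcl_R1 D) x (vhat D.Φ b.1 (D.pos_sub b.2))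
          = dotV (toV γ) (toV (D.coroot b.1))
            * Bform D.Φ D.coroot (hcl_R1 D) (vhat D.Φ b.1 (D.pos_sub b.2)) (vhat D.Φ b.1 (D.pos_sub b.2)) / 2 := by
        have hxc : ((x : ↥(NNsp D.Φ)) : Vr r) = toV γ := rfl
        rw [hxc] at hkey
        linarith
      rw [h3, he]
      ring
    rw [Finset.sum_congr rfl h2] at h1
    rw [hz, dotV_sum_right, ← h1]
    refine Finset.sum_congr rfl fun b _ => ?_
    rw [dotV_smul_right]
  -- z lies in the span of the coroots
  have hzmem : z ∈ NNsp (R2 D) := by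
    rw [hz]
    refine Submodule.sum_mem _ fun b _ => Submodule.smul_mem _ _ ?_
    exact toV_mem_NNsp _ (coroot_mem_R2 D (D.pos_sub b.2))
  set zh : ↥(NNsp (R2 D)) := ⟨z, hzmem⟩ with hzh
  -- B2 zh (vhat v) = 0 for all v in R2
  have hB2z : ∀ v, ∀ hv : v ∈ R2 D, Bform (R2 D) (cor2 D) (hcl_R2 D) zh (vhat (R2 D) v hv) = 0 := by
    intro v hv
    have hkey := Bform_key (R2 D) (cor2 D) (hcl_R2 D) (h2_R2 D) v hv zh
    have hdot : dotV ((zh : ↥(NNsp (R2 D))) : Vr r) (toV (cor2 D v)) = 0 := by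
      obtain ⟨hm, _⟩ := cor2_spec D hv
      show dotV z (toV (cor2 D v)) = 0
      rw [dotV_comm]
      exact hzorth _ hm
    rw [hdot, zero_mul] at hkey
    linarith
  have hzh_sum : zh = ∑ b ∈ D.pos.attach, e b •
      vhat (R2 D) (D.coroot b.1) (coroot_mem_R2 D (D.pos_sub b.2)) := by
    apply Subtype.ext
    rw [hzh]
    push_cast
    rw [hz]
    rfl
  have hB2zz : Bform (R2 D) (cor2 D) (hcl_R2 D) zh zh = 0 := by
    nth_rewrite 2 [hzh_sum]
    rw [Bform_sum_right]
    refine Finset.sum_eq_zero fun b _ => ?_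
    rw [Bform_smul_right]
    have h4 := hB2z (D.coroot b.1) (coroot_mem_R2 D (D.pos_sub b.2))
    rw [h4, mul_zero]
  have hz0 : z = 0 := Bform_self_zero (R2 D) (cor2 D) (hcl_R2 D) zh hB2zz
  -- conclude
  have hfinal : ∑ b ∈ D.pos.attach, e b * pairR L (D.coroot b.1) = 0 := by
    have h5 : dotV L z = 0 := by rw [hz0]; exact dotV_zero_right _
    rw [hz, dotV_sum_right] at h5
    rw [← h5]
    refine Finset.sum_congr rfl fun b _ => ?_
    rw [dotV_smul_right, pairR_eq_dotV]
  intro β hβ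
  have hterm := (Finset.sum_eq_zero_iff_of_nonneg
    (fun b _ => mul_nonneg (henn b) (hL b.1 b.2).le)).1 hfinal ⟨β, hβ⟩ (Finset.mem_attach _ _)
  have hp := hL β hβ
  have he0 : e ⟨β, hβ⟩ = 0 := by
    rcases mul_eq_zero.1 hterm with h | h
    · exact h
    · exact absurd h (ne_of_gt hp)
  rw [he] at he0
  dsimp only at he0
  rcases div_eq_zero_iff.mp he0 with h | h
  · rcases mul_eq_zero.1 h with h' | h'
    · exact h'
    · exact absurd h' (ne_of_gt (hbpos ⟨β, hβ⟩))
  · norm_num at h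

end Aux

namespace Aux

variable {r : ℕ} (D : ARDatum r)

/-- Nonnegative cone generated by positive roots. -/
def ConeP (w : Vr r) : Prop :=
  ∃ d : Lr r → ℝ, (∀ β, 0 ≤ d β) ∧ w = ∑ β ∈ D.pos, d β • toV β

lemma coneP_zero : ConeP D 0 :=
  ⟨fun _ => 0, fun _ => le_refl 0, by simp⟩

lemma coneP_add {w₁ w₂ : Vr r} (h₁ : ConeP D w₁) (h₂ : ConeP D w₂) : ConeP D (w₁ + w₂) := by
  obtain ⟨d₁, hd₁, he₁⟩ := h₁
  obtain ⟨d₂, hd₂, he₂⟩ := h₂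
  refine ⟨fun β => d₁ β + d₂ β, fun β => add_nonneg (hd₁ β) (hd₂ β), ?_⟩
  rw [he₁, he₂, ← Finset.sum_add_distrib]
  exact Finset.sum_congr rfl fun β _ => (add_smul _ _ _).symm

lemma coneP_single {α : Lr r} (hα : α ∈ D.pos) {c : ℝ} (hc : 0 ≤ c) :
    ConeP D (c • toV α) := by
  classical
  refine ⟨fun β => if β = α then c else 0, fun β => by by_cases hb : β = α <;> simp [hb, hc], ?_⟩
  have h : ∀ β ∈ D.pos, (if β = α then c else 0) • toV β
      = if β = α then c • toV β else 0 := by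
    intro β _; split <;> simp
  rw [Finset.sum_congr rfl h, Finset.sum_ite_eq' D.pos α (fun β => c • toV β), if_pos hα]

lemma up_cone {x y : Vr r} (h : D.Up x y) : ConeP D (y - x) := by
  induction h with
  | refl => simpa using coneP_zero D
  | @tail b c hxb hbc ih =>
    obtain ⟨α, hα, m, hle, heq⟩ := hbc
    have hstep : c - b = (pairR (c + toV D.ρ) (D.coroot α) - (m:ℝ) * (D.p:ℝ)) • toV α := by
      rw [heq]; abel
    have h1 : ConeP D (c - b) := by
      rw [hstep]
      exact coneP_single D hα (by linarith)
    have h2 : c - x = (c - b) + (b - x) := by abel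
    rw [h2]
    exact coneP_add D h1 ih

/-- The key functional form of elements of `W_p`. -/
def Pred (w : ARDatum.G r) : Prop :=
  ∀ δ ∈ D.pos, ∃ γ ∈ D.pos, ∃ ε : ℝ, (ε = 1 ∨ ε = -1) ∧ ∃ k : ℤ,
    ∀ x : Vr r, pairR (w x) (D.coroot δ) = ε * pairR x (D.coroot γ) + (k : ℝ) * (D.p : ℝ)

lemma pred_one : Pred D 1 := by
  intro δ hδ
  refine ⟨δ, hδ, 1, Or.inl rfl, 0, fun x => ?_⟩
  rw [show ((1 : ARDatum.G r) x) = x from rfl]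
  push_cast; ring

lemma pred_mul {v w : ARDatum.G r} (hv : Pred D v) (hw : Pred D w) : Pred D (v * w) := by
  intro δ hδ
  obtain ⟨γ₁, hγ₁, ε₁, hε₁, k₁, H₁⟩ := hv δ hδ
  obtain ⟨γ₂, hγ₂, ε₂, hε₂, k₂, H₂⟩ := hw γ₁ hγ₁
  rcases hε₁ with rfl | rfl
  · refine ⟨γ₂, hγ₂, ε₂, hε₂, k₁ + k₂, fun x => ?_⟩
    rw [show ((v * w) x) = v (w x) from rfl, H₁ (w x), H₂ x]
    push_cast; ring
  · refine ⟨γ₂, hγ₂, -ε₂, ?_, k₁ - k₂, fun x => ?_⟩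
    · rcases hε₂ with rfl | rfl
      · exact Or.inr rfl
      · exact Or.inl (by norm_num)
    · rw [show ((v * w) x) = v (w x) from rfl, H₁ (w x), H₂ x]
      push_cast; ring

lemma pred_gen_refl {α : Lr r} (hα : α ∈ D.pos) {g : ARDatum.G r}
    (hg : D.IsLinRefl α g) : Pred D g := by
  intro δ hδ
  have hδΦ := D.pos_sub hδ
  have hαΦ := D.pos_sub hα
  obtain ⟨γ₀, hγ₀, hco⟩ := D.reflect_coroot_mem α hαΦ δ hδΦ
  have hγ₀Φ : γ₀ ∈ D.Φ := by exact_mod_cast hγ₀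
  have hbase : ∀ x : Vr r, pairR (g x) (D.coroot δ) = pairR x (D.coroot γ₀) := by
    intro x
    rw [hg x, pairR_sub_left, pairR_smul_left, pairR_toV, hco,
      pairR_sub_right, pairR_zsmul_right]
    push_cast; ring
  rcases D.pos_or_neg γ₀ hγ₀Φ with hp | hp
  · refine ⟨γ₀, hp, 1, Or.inl rfl, 0, fun x => ?_⟩
    rw [hbase x]; push_cast; ring
  · refine ⟨-γ₀, hp, -1, Or.inr rfl, 0, fun x => ?_⟩
    rw [hbase x, neg_coroot D hγ₀Φ, pairR_neg_right]
    push_cast; ring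

lemma pred_gen_transl {α : Lr r} (hα : α ∈ D.pos) {m : ℤ} {g : ARDatum.G r}
    (hg : D.IsTransl α m g) : Pred D g := by
  intro δ hδ
  refine ⟨δ, hδ, 1, Or.inl rfl, m * pairZ α (D.coroot δ), fun x => ?_⟩
  rw [hg x, pairR_add_left, pairR_smul_left, pairR_toV]
  push_cast; ring

lemma linrefl_invol {α : Lr r} (hαΦ : α ∈ D.Φ) {g : ARDatum.G r}
    (hg : D.IsLinRefl α g) : g * g = 1 := by
  have hca : (pairZ α (D.coroot α) : ℝ) = 2 := by
    rw [D.root_coroot_two α hαΦ]; norm_num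
  apply AffineEquiv.ext
  intro y
  show g (g y) = y
  rw [hg (g y), hg y, pairR_sub_left, pairR_smul_left, pairR_toV, hca]
  push_cast
  match_scalars <;> ring

lemma transl_inv {α : Lr r} {m : ℤ} {g : ARDatum.G r} (hg : D.IsTransl α m g) :
    D.IsTransl α (-m) g⁻¹ := by
  intro y
  have h1 : g (y + (((-m : ℤ) : ℝ) * (D.p : ℝ)) • toV α) = y := by
    rw [hg]
    push_cast
    match_scalars <;> ring
  have h2 : g⁻¹ (g (y + (((-m : ℤ) : ℝ) * (D.p : ℝ)) • toV α))
      = y + (((-m : ℤ) : ℝ) * (D.p : ℝ)) • toV α := by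
    show (g⁻¹ * g) _ = _
    rw [inv_mul_cancel]
    rfl
  rw [h1] at h2
  rw [h2]

lemma wp_pred {w : ARDatum.G r} (hw : w ∈ D.Wp) : Pred D w := by
  have main : Pred D w ∧ Pred D w⁻¹ := by
    refine Subgroup.closure_induction ?_ ?_ ?_ ?_ hw
    · rintro g (⟨α, hα, hg⟩ | ⟨α, hα, m, hg⟩)
      · have hinv : g⁻¹ = g := inv_eq_of_mul_eq_one_right (linrefl_invol D (D.pos_sub hα) hg)
        exact ⟨pred_gen_refl D hα hg, hinv ▸ pred_gen_refl D hα hg⟩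
      · exact ⟨pred_gen_transl D hα hg, pred_gen_transl D hα (transl_inv D hg)⟩
    · exact ⟨pred_one D, by rw [inv_one]; exact pred_one D⟩
    · rintro x y hx hy ⟨hx1, hx2⟩ ⟨hy1, hy2⟩
      exact ⟨pred_mul D hx1 hy1, by rw [mul_inv_rev]; exact pred_mul D hy2 hx2⟩
    · rintro x hx ⟨h1, h2⟩
      exact ⟨h2, by rw [inv_inv]; exact h1⟩
  exact main.1

lemma good {w : ARDatum.G r} (hw : w ∈ D.Wp) (lam mu : Lr r)
    (hlam : toV lam ∈ D.FundC) (hmu : toV mu ∈ D.FundCBar) {δ : Lr r} (hδ : δ ∈ D.pos) :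
    ∃ K : ℤ, (K : ℝ) * (D.p : ℝ) < pairR (w (toV lam + toV D.ρ)) (D.coroot δ) ∧
      pairR (w (toV lam + toV D.ρ)) (D.coroot δ) < ((K : ℝ) + 1) * (D.p : ℝ) ∧
      (K : ℝ) * (D.p : ℝ) ≤ pairR (w (toV mu + toV D.ρ)) (D.coroot δ) ∧
      pairR (w (toV mu + toV D.ρ)) (D.coroot δ) ≤ ((K : ℝ) + 1) * (D.p : ℝ) := by
  have hlam' : ∀ α ∈ D.pos, 0 < pairR (toV lam + toV D.ρ) (D.coroot α) ∧
      pairR (toV lam + toV D.ρ) (D.coroot α) < (D.p : ℝ) := hlam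
  have hmu' : ∀ α ∈ D.pos, 0 ≤ pairR (toV mu + toV D.ρ) (D.coroot α) ∧
      pairR (toV mu + toV D.ρ) (D.coroot α) ≤ (D.p : ℝ) := hmu
  obtain ⟨γ, hγ, ε, hε, k, H⟩ := wp_pred D hw δ hδ
  have hl1 := (hlam' γ hγ).1
  have hl2 := (hlam' γ hγ).2
  have hm1 := (hmu' γ hγ).1
  have hm2 := (hmu' γ hγ).2
  have Hl := H (toV lam + toV D.ρ)
  have Hm := H (toV mu + toV D.ρ)
  rcases hε with rfl | rfl
  · refine ⟨k, ?_, ?_, ?_, ?_⟩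
    · rw [Hl]; push_cast; linarith
    · rw [Hl]; push_cast; linarith
    · rw [Hm]; push_cast; linarith
    · rw [Hm]; push_cast; linarith
  · refine ⟨k - 1, ?_, ?_, ?_, ?_⟩
    · rw [Hl]; push_cast; linarith
    · rw [Hl]; push_cast; linarith
    · rw [Hm]; push_cast; linarith
    · rw [Hm]; push_cast; linarith

end Aux

open Aux in
/-- For any reflection `t ∈ W_p`: if `tv·μ ≺ v·μ` then `tv·λ ≺ v·λ`. -/
theorem stmt5 {r : ℕ} (D : ARDatum r)
    (s : ARDatum.G r) (hs : s ∈ D.Sp)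
    (lam mu : Lr r) (hlam : toV lam ∈ D.FundC) (hmu : toV mu ∈ D.FundCBar)
    (hmustab : ∀ g ∈ D.Wp, (D.dot g (toV mu) = toV mu ↔ g = 1 ∨ g = s))
    (hlamstab : ∀ g ∈ D.Wp, D.dot g (toV lam) = toV lam → g = 1)
    (v : ARDatum.G r) (hv : v ∈ D.Wp)
    (t : ARDatum.G r) (ht : t ∈ D.Wp) (htr : D.IsReflection t)
    (h : D.Ups (D.dot (t * v) (toV mu)) (D.dot v (toV mu))) :
    D.Ups (D.dot (t * v) (toV lam)) (D.dot v (toV lam)) := by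
  classical
  obtain ⟨α, hα, m, htf⟩ := htr
  have hp0 : (0 : ℝ) < (D.p : ℝ) := by exact_mod_cast D.hp.pos
  have hα0 : toV α ≠ 0 := fun hh => D.root_ne_zero α (D.pos_sub hα) (toV_eq_zero hh)
  have hdotv : ∀ (g : ARDatum.G r) (ν : Lr r),
      g (toV ν + toV D.ρ) = D.dot g (toV ν) + toV D.ρ := by
    intro g ν
    show g (toV ν + toV D.ρ) = g (toV ν + toV D.ρ) - toV D.ρ + toV D.ρ
    abel
  have key : ∀ (ν : Lr r), D.dot (t * v) (toV ν) = D.dot v (toV ν)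
      - (pairR (D.dot v (toV ν) + toV D.ρ) (D.coroot α) - (m : ℝ) * (D.p : ℝ)) • toV α := by
    intro ν
    show (t * v) (toV ν + toV D.ρ) - toV D.ρ = _
    rw [show ((t * v) (toV ν + toV D.ρ)) = t (v (toV ν + toV D.ρ)) from rfl, htf,
      hdotv v ν]
    abel
  -- the coefficient at μ is nonzero
  have hne : pairR (D.dot v (toV mu) + toV D.ρ) (D.coroot α) - (m : ℝ) * (D.p : ℝ) ≠ 0 := by
    intro h0
    apply h.2
    rw [key mu, h0, zero_smul, sub_zero]
  -- the coefficient at μ is nonnegative, by the cone argument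
  have hcone : ConeP D
      ((pairR (D.dot v (toV mu) + toV D.ρ) (D.coroot α) - (m : ℝ) * (D.p : ℝ)) • toV α) := by
    have h1 := up_cone D h.1
    rw [key mu] at h1
    have h2 : D.dot v (toV mu) - (D.dot v (toV mu)
        - (pairR (D.dot v (toV mu) + toV D.ρ) (D.coroot α) - (m : ℝ) * (D.p : ℝ)) • toV α)
        = (pairR (D.dot v (toV mu) + toV D.ρ) (D.coroot α) - (m : ℝ) * (D.p : ℝ)) • toV α := by
      abel
    rwa [h2] at h1
  have hlamFC : ∀ β ∈ D.pos, 0 < pairR (toV lam + toV D.ρ) (D.coroot β) ∧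
      pairR (toV lam + toV D.ρ) (D.coroot β) < (D.p : ℝ) := hlam
  have hcnonneg : 0 ≤ pairR (D.dot v (toV mu) + toV D.ρ) (D.coroot α) - (m : ℝ) * (D.p : ℝ) := by
    by_contra hneg
    push_neg at hneg
    set c := pairR (D.dot v (toV mu) + toV D.ρ) (D.coroot α) - (m : ℝ) * (D.p : ℝ) with hc
    obtain ⟨d, hd0, hrep⟩ := hcone
    have hd'0 : ∀ β, 0 ≤ d β + (if β = α then -c else 0) := by
      intro β
      by_cases hb : β = α
      · rw [if_pos hb]; have := hd0 β; linarith
      · rw [if_neg hb]; simpa using hd0 β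
    have hsum0 : ∑ β ∈ D.pos, (d β + if β = α then -c else 0) • toV β = 0 := by
      have hsplit : ∀ β ∈ D.pos, (d β + if β = α then -c else 0) • toV β
          = d β • toV β + (if β = α then (-c) • toV β else 0) := by
        intro β _
        by_cases hb : β = α <;> simp [hb, add_smul]
      rw [Finset.sum_congr rfl hsplit, Finset.sum_add_distrib, ← hrep,
        Finset.sum_ite_eq' D.pos α (fun β => (-c) • toV β), if_pos hα]
      rw [← add_smul]
      simp
    have hz := pos_indep D (toV lam + toV D.ρ) (fun β hβ => (hlamFC β hβ).1)
      _ hd'0 hsum0 α hα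
    rw [if_pos rfl] at hz
    have := hd0 α
    linarith
  have hcpos : 0 < pairR (D.dot v (toV mu) + toV D.ρ) (D.coroot α) - (m : ℝ) * (D.p : ℝ) :=
    lt_of_le_of_ne hcnonneg (Ne.symm hne)
  -- interval comparison between λ and μ
  obtain ⟨K, hK1, hK2, hK3, hK4⟩ := good D hv lam mu hlam hmu hα
  rw [hdotv v lam] at hK1 hK2
  rw [hdotv v mu] at hK3 hK4
  have hmK : m ≤ K := by
    have h1 : (m : ℝ) * (D.p : ℝ) < ((K : ℝ) + 1) * (D.p : ℝ) := by linarith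
    have h2 : (m : ℝ) < (K : ℝ) + 1 := lt_of_mul_lt_mul_right h1 hp0.le
    have h3 : m < K + 1 := by exact_mod_cast h2
    omega
  have hclpos : 0 < pairR (D.dot v (toV lam) + toV D.ρ) (D.coroot α) - (m : ℝ) * (D.p : ℝ) := by
    have h1 : (m : ℝ) * (D.p : ℝ) ≤ (K : ℝ) * (D.p : ℝ) := by
      have : (m : ℝ) ≤ (K : ℝ) := by exact_mod_cast hmK
      exact mul_le_mul_of_nonneg_right this hp0.le
    linarith
  constructor
  · exact Relation.ReflTransGen.single ⟨α, hα, m, by linarith, key lam⟩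
  · intro heq
    rw [key lam] at heq
    have h0 : (pairR (D.dot v (toV lam) + toV D.ρ) (D.coroot α) - (m : ℝ) * (D.p : ℝ))
        • toV α = 0 := sub_eq_self.mp heq
    rcases smul_eq_zero.1 h0 with h1 | h1
    · linarith
    · exact hα0 h1

end
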